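/- If q·r > 1, then for every natural number n with k·r ≤ n ≤ k·r + k one has P(n) > P(n - 1). -/

import Mathlib

/-- Lemma 2.1: if `q·r > 1`, then `P n > P (n-1)` for every `n` with
`k·r ≤ n ≤ k·r + k`. -/
theorem pmf_increasing_of_qr_gt_one
    (k r : ℕ) (hk : 1 ≤ k) (hr : 1 ≤ r)
    (p q : ℝ) (hp0 : 0 < p) (hp1 : p < 1) (hq : q = 1 - p)
    (P : ℕ → ℝ)
    (hP0 : ∀ n, n < k * r → P n = 0)
    (hPkr : P (k * r) = p ^ (k * r))
    (hrec : ∀ n, k * r < n →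
      ((n : ℝ) - k * r) * P n =
        q * ∑ j ∈ Finset.Icc 1 k,
          ((n : ℝ) - k * r + j * (r - 1)) * p ^ (j - 1) * P (n - j))
    (hqr : q * r > 1) :
    ∀ n : ℕ, k * r ≤ n → n ≤ k * r + k → P n > P (n - 1) := by
  subst hq
  obtain ⟨K, rfl⟩ : ∃ K, k = K + 1 := ⟨k - 1, by omega⟩
  have hkr : K + 1 ≤ (K+1) * r := Nat.le_mul_of_pos_right _ hr
  -- the key identity :  m * P (kr + m) = (m-1) * P (kr + m - 1) + q*r*S
  have key : ∀ m : ℕ, 1 ≤ m → m ≤ K + 1 →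
      (m : ℝ) * P ((K+1) * r + m) =
        ((m : ℝ) - 1) * P ((K+1) * r + m - 1) +
          (1 - p) * r * ∑ j ∈ Finset.Icc 1 (K+1),
            p ^ (j - 1) * P ((K+1) * r + m - j) := by
    intro m hm1 hmk
    obtain ⟨m', rfl⟩ : ∃ m', m = m' + 1 := ⟨m - 1, by omega⟩
    have h1 := hrec ((K+1) * r + (m'+1)) (by omega)
    rw [show ((((K+1) * r + (m'+1) : ℕ)) : ℝ) - ((K+1 : ℕ) : ℝ) * ((r : ℕ) : ℝ)
        = (m' : ℝ) + 1 from by push_cast; ring] at h1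
    -- star identity
    have hstar : (1 - p) * ∑ j ∈ Finset.Icc 1 (K+1),
        ((m' : ℝ) + 1 - r + (j : ℝ) * ((r : ℝ) - 1)) * p ^ (j - 1) *
          P ((K+1) * r + (m'+1) - j)
        = (m' : ℝ) * P ((K+1) * r + m') := by
      rcases Nat.eq_zero_or_pos m' with h0 | hpos
      · subst h0
        rw [Finset.sum_eq_zero, mul_zero]
        · simp
        · intro j hj
          simp only [Finset.mem_Icc] at hj
          rcases eq_or_lt_of_le hj.1 with h1' | h2'
          · rw [← h1']; push_cast; ring_nf
          · rw [hP0 ((K+1) * r + (0+1) - j) (by omega), mul_zero]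
      · have h2 := hrec ((K+1) * r + m') (by omega)
        rw [show ((((K+1) * r + m' : ℕ)) : ℝ) - ((K+1 : ℕ) : ℝ) * ((r : ℕ) : ℝ)
            = (m' : ℝ) from by push_cast; ring] at h2
        rw [← Finset.Ico_add_one_right_eq_Icc, Finset.sum_Ico_eq_sum_range] at h2 ⊢
        simp only [Nat.succ_sub_one, Nat.add_sub_cancel] at h2 ⊢
        rw [Finset.sum_range_succ']
        rw [Finset.sum_range_succ] at h2
        have hzero : ((m' : ℝ) + ((1+K : ℕ) : ℝ) * ((r:ℝ) - 1)) * p ^ ((1+K) - 1) *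
            P ((K+1) * r + m' - (1+K)) = 0 := by
          rw [hP0 ((K+1) * r + m' - (1+K)) (by omega), mul_zero]
        have hshift : ∀ i ∈ Finset.range K,
            ((m' : ℝ) + 1 - r + ((1+(i+1) : ℕ) : ℝ) * ((r : ℝ) - 1)) * p ^ ((1+(i+1)) - 1) *
              P ((K+1) * r + (m'+1) - (1+(i+1)))
            = p * (((m' : ℝ) + ((1+i : ℕ) : ℝ) * ((r:ℝ) - 1)) * p ^ ((1+i) - 1) *
              P ((K+1) * r + m' - (1+i))) := by
          intro i _
          rw [show (K+1) * r + (m'+1) - (1+(i+1)) = (K+1) * r + m' - (1+i) from by omega,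
            show (1+(i+1)) - 1 = i + 1 from by omega, show (1+i) - 1 = i from by omega,
            pow_succ]
          push_cast
          ring
        rw [Finset.sum_congr rfl hshift, ← Finset.mul_sum]
        rw [hzero, add_zero] at h2
        have hfirst : ((m' : ℝ) + 1 - r + ((1+0 : ℕ) : ℝ) * ((r : ℝ) - 1)) * p ^ ((1+0) - 1) *
            P ((K+1) * r + (m'+1) - (1+0)) = (m' : ℝ) * P ((K+1) * r + m') := by
          rw [show (K+1) * r + (m'+1) - (1+0) = (K+1) * r + m' from by omega]
          push_cast
          ring
        rw [hfirst]
        linear_combination (-p) * h2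
    -- combine
    have hsplit : ∀ j ∈ Finset.Icc 1 (K+1),
        ((m' : ℝ) + 1 + (j : ℝ) * ((r : ℝ) - 1)) * p ^ (j - 1) * P ((K+1) * r + (m'+1) - j)
        = ((m' : ℝ) + 1 - r + (j : ℝ) * ((r : ℝ) - 1)) * p ^ (j - 1) *
            P ((K+1) * r + (m'+1) - j)
          + (r : ℝ) * (p ^ (j - 1) * P ((K+1) * r + (m'+1) - j)) := by
      intro j _; ring
    rw [Finset.sum_congr rfl hsplit, Finset.sum_add_distrib, ← Finset.mul_sum] at h1
    rw [show (K+1) * r + (m'+1) - 1 = (K+1) * r + m' from by omega]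
    push_cast at h1 ⊢
    linarith [h1, hstar]
  -- the main induction
  have main : ∀ m : ℕ, m ≤ K + 1 → 0 < P ((K+1) * r + m) ∧
      (1 ≤ m → P ((K+1) * r + m - 1) < P ((K+1) * r + m)) := by
    intro m
    induction m using Nat.strong_induction_on with
    | _ m IH =>
      intro hmk
      rcases Nat.eq_zero_or_pos m with h0 | hm1
      · subst h0
        refine ⟨?_, by omega⟩
        simpa [hPkr] using pow_pos hp0 ((K+1) * r)
      · have hprev : 0 < P ((K+1) * r + (m-1)) := (IH (m-1) (by omega) (by omega)).1
        have hnn : ∀ j ∈ Finset.Icc 1 (K+1),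
            0 ≤ p ^ (j - 1) * P ((K+1) * r + m - j) := by
          intro j hj
          simp only [Finset.mem_Icc] at hj
          rcases le_or_gt j m with hjm | hjm
          · rw [show (K+1) * r + m - j = (K+1) * r + (m - j) from by omega]
            exact mul_nonneg (pow_nonneg hp0.le _) (IH (m-j) (by omega) (by omega)).1.le
          · rw [hP0 ((K+1) * r + m - j) (by omega), mul_zero]
        have hS : P ((K+1) * r + m - 1) ≤
            ∑ j ∈ Finset.Icc 1 (K+1), p ^ (j - 1) * P ((K+1) * r + m - j) := by
          have h1m : (1:ℕ) ∈ Finset.Icc 1 (K+1) := by simp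
          simpa using Finset.single_le_sum hnn h1m
        have hPm1 : 0 < P ((K+1) * r + m - 1) := by
          rw [show (K+1) * r + m - 1 = (K+1) * r + (m-1) from by omega]
          exact hprev
        have hSpos : 0 < ∑ j ∈ Finset.Icc 1 (K+1), p ^ (j - 1) * P ((K+1) * r + m - j) :=
          lt_of_lt_of_le hPm1 hS
        have hkey := key m hm1 hmk
        have hmR : (0:ℝ) < (m : ℝ) := by exact_mod_cast hm1
        have hlt : P ((K+1) * r + m - 1) < P ((K+1) * r + m) := by
          have hprod : 0 < ((1-p) * (r:ℝ) - 1) *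
              ∑ j ∈ Finset.Icc 1 (K+1), p ^ (j - 1) * P ((K+1) * r + m - j) :=
            mul_pos (by linarith) hSpos
          nlinarith [hkey, hS, hPm1, hprod, hmR]
        exact ⟨lt_trans hPm1 hlt, fun _ => hlt⟩
  intro n hn1 hn2
  obtain ⟨m, rfl⟩ : ∃ m, n = (K+1) * r + m := ⟨n - (K+1) * r, by omega⟩
  rcases Nat.eq_zero_or_pos m with h0 | hm1
  · subst h0
    have h1 : P ((K+1) * r + 0 - 1) = 0 := hP0 _ (by omega)
    rw [h1, show (K+1) * r + 0 = (K+1) * r from by omega, hPkr]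
    exact pow_pos hp0 _
  · exact (main m (by omega)).2 hm1
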